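/- Moments of the Lebesgue measure via positively homogeneous functions: let d ∈ ℝ, d ≠ 0, and let h : ℝⁿ → [0,∞) be Borel measurable and positively homogeneous of degree d, i.e. h(t x) = t^d h(x) for all x ∈ ℝⁿ ∖ {0} and t > 0. Let B_h := {x ∈ ℝⁿ : h(x) ≤ 1} and assume λ(B_h) < ∞. Then for every multi-index k ∈ ℕⁿ, ∫_{B_h} x^k dx = Γ(1 + (n + |k|)/d)⁻¹ ∫_{ℝⁿ} x^k e^{−h(x)} dx, where |k| = k₁ + ⋯ + kₙ and x^k = x₁^{k₁} ⋯ xₙ^{kₙ}. -/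

import Mathlib

open MeasureTheory Set
open scoped ENNReal Pointwise

section LasserreAux

variable {n : ℕ}

private lemma mon_smul (k : Fin n → ℕ) (c : ℝ) (x : Fin n → ℝ) :
    ∏ i, (c • x) i ^ k i = c ^ (∑ i, k i) * ∏ i, x i ^ k i := by
  simp only [Pi.smul_apply, smul_eq_mul, mul_pow]
  rw [Finset.prod_mul_distrib, Finset.prod_pow_eq_pow_sum]

private lemma mon_continuous (k : Fin n → ℕ) :
    Continuous fun x : Fin n → ℝ => ∏ i, x i ^ k i :=
  continuous_finset_prod _ fun i _ => (continuous_apply i).pow _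

/-- scaling of a set lintegral under dilation. -/
private lemma setLIntegral_smul_set (g : (Fin n → ℝ) → ℝ≥0∞) (hg : Measurable g)
    {A : Set (Fin n → ℝ)} (hA : MeasurableSet A) {c : ℝ} (hc : 0 < c) :
    ∫⁻ x in c • A, g x = ENNReal.ofReal (c ^ n) * ∫⁻ x in A, g (c • x) := by
  have hcsA : MeasurableSet (c • A) := hA.const_smul₀ c
  have key : ∀ x, A.indicator (fun y => g (c • y)) x = (c • A).indicator g (c • x) := by
    intro x
    by_cases hx : x ∈ A
    · rw [indicator_of_mem hx, indicator_of_mem (smul_mem_smul_set hx)]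
    · rw [indicator_of_notMem hx, indicator_of_notMem]
      intro hmem
      exact hx ((smul_mem_smul_set_iff₀ hc.ne' A x).mp hmem)
  have hind : Measurable ((c • A).indicator g) := hg.indicator hcsA
  have calc1 : ∫⁻ x in A, g (c • x)
      = ENNReal.ofReal ((c ^ n)⁻¹) * ∫⁻ x in c • A, g x := by
    calc ∫⁻ x in A, g (c • x)
        = ∫⁻ x, A.indicator (fun y => g (c • y)) x := (lintegral_indicator hA _).symm
      _ = ∫⁻ x, (c • A).indicator g (c • x) := by simp_rw [key]
      _ = ∫⁻ y, (c • A).indicator g y ∂(Measure.map (c • ·) volume) :=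
          (lintegral_map hind (measurable_const_smul c)).symm
      _ = ENNReal.ofReal ((c ^ n)⁻¹) * ∫⁻ y, (c • A).indicator g y := by
          rw [Measure.map_addHaar_smul volume hc.ne', lintegral_smul_measure,
            Module.finrank_fin_fun, abs_of_nonneg (by positivity), smul_eq_mul]
      _ = ENNReal.ofReal ((c ^ n)⁻¹) * ∫⁻ x in c • A, g x := by rw [lintegral_indicator hcsA]
  rw [calc1, ← mul_assoc, ← ENNReal.ofReal_mul (by positivity), mul_inv_cancel₀ (by positivity),
    ENNReal.ofReal_one, one_mul]

end LasserreAux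

/-- moments of the Lebesgue measure on the sublevel set of a positively
homogeneous function (Lasserre's formula). -/
theorem moments_positively_homogeneous
    (n : ℕ) (hn : 1 ≤ n)
    (d : ℝ) (hd : d ≠ 0)
    (h : (Fin n → ℝ) → ℝ)
    (hmeas : Measurable h)
    (hpos : ∀ x, 0 ≤ h x)
    (hhom : ∀ x : Fin n → ℝ, x ≠ 0 → ∀ t : ℝ, 0 < t → h (t • x) = t ^ d * h x)
    (Bh : Set (Fin n → ℝ))
    (hBh : Bh = {x | h x ≤ 1})
    (hvol : volume Bh < ⊤) :
    ∀ k : Fin n → ℕ,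
      ∫ x in Bh, ∏ i, x i ^ k i =
        (Real.Gamma (1 + ((n : ℝ) + (∑ i, k i : ℕ)) / d))⁻¹ *
          ∫ x : Fin n → ℝ, (∏ i, x i ^ k i) * Real.exp (-h x) := by
  intro k
  haveI : Nonempty (Fin n) := ⟨⟨0, hn⟩⟩
  haveI : Nontrivial (Fin n → ℝ) := inferInstance
  set m : (Fin n → ℝ) → ℝ := fun x => ∏ i, x i ^ k i with hm_def
  set j : ℕ := ∑ i, k i with hj_def
  set p : ℝ := (n : ℝ) + (j : ℕ) with hp_def
  have hm_cont : Continuous m := mon_continuous k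
  have hm_meas : Measurable m := hm_cont.measurable
  have hBh_meas : MeasurableSet Bh := by rw [hBh]; exact hmeas measurableSet_Iic
  have hsing : volume ({0} : Set (Fin n → ℝ)) = 0 := measure_singleton 0
  -- rpow computations
  have hcd : ∀ s : ℝ, 0 < s → (s ^ (1 / d)) ^ d = s := by
    intro s hs
    rw [← Real.rpow_mul hs.le, one_div, inv_mul_cancel₀ hd, Real.rpow_one]
  have hcpos : ∀ s : ℝ, 0 < s → 0 < s ^ (1 / d) := fun s hs => Real.rpow_pos_of_pos hs _
  -- scaling of sublevel sets (away from 0)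
  have hset : ∀ s : ℝ, 0 < s →
      {x | h x ≤ s} \ {0} = (s ^ (1 / d)) • (Bh \ {0}) := by
    intro s hs
    have hc := hcpos s hs
    ext x
    constructor
    · rintro ⟨hx, hx0⟩
      simp only [mem_singleton_iff] at hx0
      simp only [mem_setOf_eq] at hx
      refine ⟨(s ^ (1 / d))⁻¹ • x, ⟨?_, ?_⟩, smul_inv_smul₀ hc.ne' x⟩
      · rw [hBh, mem_setOf_eq, hhom x hx0 (s ^ (1 / d))⁻¹ (by positivity),
          Real.inv_rpow hc.le, hcd s hs]
        calc s⁻¹ * h x ≤ s⁻¹ * s := by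
              exact mul_le_mul_of_nonneg_left hx (by positivity)
          _ = 1 := inv_mul_cancel₀ hs.ne'
      · simp only [mem_singleton_iff]
        exact smul_ne_zero (inv_ne_zero hc.ne') hx0
    · rintro ⟨y, ⟨hy, hy0⟩, rfl⟩
      simp only [mem_singleton_iff] at hy0
      rw [hBh, mem_setOf_eq] at hy
      constructor
      · rw [mem_setOf_eq, hhom y hy0 _ hc, hcd s hs]
        calc s * h y ≤ s * 1 := mul_le_mul_of_nonneg_left hy hs.le
          _ = s := mul_one s
      · simp only [mem_singleton_iff]
        exact smul_ne_zero hc.ne' hy0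
  -- a.e. version
  have hae : ∀ s : ℝ, 0 < s →
      {x | h x ≤ s} =ᵐ[volume] (s ^ (1 / d)) • Bh := by
    intro s hs
    have hc := hcpos s hs
    have hsd : (s ^ (1 / d)) • (Bh \ {0}) = (s ^ (1 / d)) • Bh \ {0} := by
      rw [show ((s ^ (1 / d)) • (Bh \ {0}) : Set (Fin n → ℝ))
          = (s ^ (1 / d) • ·) '' (Bh \ {0}) from rfl,
        image_diff (MulAction.injective₀ hc.ne'), image_singleton, smul_zero]
      rfl
    have h1 : {x | h x ≤ s} \ (s ^ (1 / d)) • Bh ⊆ {0} := by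
      intro x ⟨hx, hx2⟩
      by_contra hx0
      simp only [mem_singleton_iff] at hx0
      have : x ∈ {x | h x ≤ s} \ {0} := ⟨hx, hx0⟩
      rw [hset s hs, hsd] at this
      exact hx2 this.1
    have h2 : (s ^ (1 / d)) • Bh \ {x | h x ≤ s} ⊆ {0} := by
      intro x ⟨hx, hx2⟩
      by_contra hx0
      simp only [mem_singleton_iff] at hx0
      have : x ∈ (s ^ (1 / d)) • Bh \ {0} := ⟨hx, hx0⟩
      rw [← hsd, ← hset s hs] at this
      exact hx2 this.1
    rw [MeasureTheory.ae_eq_set]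
    exact ⟨measure_mono_null h1 hsing, measure_mono_null h2 hsing⟩
  -- positivity of d
  have hd_pos : 0 < d := by
    rcases hd.lt_or_gt with hneg | hpos'
    · exfalso
      have hBh0 : volume Bh = 0 := by
        by_contra hB0
        have h2 : (2 : ℝ) • Bh ⊆ Bh ∪ {0} := by
          rintro y ⟨x, hx, rfl⟩
          rcases eq_or_ne x 0 with rfl | hx0
          · right; simp
          · left
            rw [hBh, mem_setOf_eq] at hx ⊢
            rw [hhom x hx0 2 (by norm_num)]
            have h2d : (2 : ℝ) ^ d ≤ 1 :=
              Real.rpow_le_one_of_one_le_of_nonpos one_le_two hneg.le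
            calc (2 : ℝ) ^ d * h x ≤ 1 * h x :=
                  mul_le_mul_of_nonneg_right h2d (hpos x)
              _ ≤ 1 := by rw [one_mul]; exact hx
        have hv2 : volume ((2 : ℝ) • Bh) = ENNReal.ofReal (2 ^ n) * volume Bh := by
          rw [Measure.addHaar_smul_of_nonneg volume (by norm_num) Bh, Module.finrank_fin_fun]
        have hle : ENNReal.ofReal (2 ^ n) * volume Bh ≤ volume Bh := by
          rw [← hv2]
          calc volume ((2 : ℝ) • Bh) ≤ volume (Bh ∪ {0}) := measure_mono h2
            _ ≤ volume Bh + volume ({0} : Set (Fin n → ℝ)) := measure_union_le _ _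
            _ = volume Bh := by rw [hsing, add_zero]
        have h2le : (2 : ℝ≥0∞) ≤ ENNReal.ofReal (2 ^ n) := by
          rw [show (2 : ℝ≥0∞) = ENNReal.ofReal 2 by norm_num]
          exact ENNReal.ofReal_le_ofReal (by
            calc (2 : ℝ) = 2 ^ 1 := (pow_one 2).symm
              _ ≤ 2 ^ n := pow_le_pow_right₀ one_le_two hn)
        have hlt : volume Bh < 2 * volume Bh := by
          rw [two_mul]
          exact ENNReal.lt_add_right hvol.ne hB0
        have : volume Bh < volume Bh :=
          hlt.trans_le ((mul_le_mul_left h2le _).trans hle)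
        exact this.false
      -- every sublevel set is null
      have hnull : ∀ s : ℝ, 0 < s → volume {x | h x ≤ s} = 0 := by
        intro s hs
        rw [measure_congr (hae s hs), Measure.addHaar_smul volume, hBh0, mul_zero]
      have hcover : (univ : Set (Fin n → ℝ)) = ⋃ N : ℕ, {x | h x ≤ (N : ℝ) + 1} := by
        ext x
        simp only [mem_univ, mem_iUnion, mem_setOf_eq, true_iff]
        exact ⟨⌈h x⌉₊, (Nat.le_ceil _).trans (by linarith)⟩
      have huniv0 : volume (univ : Set (Fin n → ℝ)) = 0 := by
        rw [hcover]
        exact measure_iUnion_null fun N => hnull _ (by positivity)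
      have huniv_top : volume (univ : Set (Fin n → ℝ)) = ⊤ := by
        rw [MeasureTheory.volume_pi, Measure.pi_univ]
        simp only [Real.volume_univ, Finset.prod_const, Finset.card_univ, Fintype.card_fin]
        exact ENNReal.top_pow (by omega)
      rw [huniv0] at huniv_top
      exact (ENNReal.zero_ne_top huniv_top).elim
    · exact hpos'
  have hp_pos : 0 < p := by
    have : (1 : ℝ) ≤ (n : ℝ) := by exact_mod_cast hn
    have : (0 : ℝ) ≤ (j : ℝ) := Nat.cast_nonneg j
    rw [hp_def]; positivity
  have hGamma_pos : 0 < Real.Gamma (1 + p / d) :=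
    Real.Gamma_pos_of_pos (by positivity)
  -- the nat-power / rpow bridge
  have hpow : ∀ s : ℝ, 0 < s → (s ^ (1 / d)) ^ (n + j : ℕ) = s ^ (p / d) := by
    intro s hs
    have hc := hcpos s hs
    rw [← Real.rpow_natCast (s ^ (1 / d)) (n + j), ← Real.rpow_mul hs.le]
    congr 1
    rw [hp_def]
    push_cast
    ring
  -- Bochner moment scaling
  have hBint : ∀ s : ℝ, 0 < s →
      ∫ x in {x | h x ≤ s}, m x = s ^ (p / d) * ∫ x in Bh, m x := by
    intro s hs
    have hc := hcpos s hs
    have e1 : ∫ x in {x | h x ≤ s}, m x = ∫ x in (s ^ (1 / d)) • Bh, m x :=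
      setIntegral_congr_set (hae s hs)
    have e2 := Measure.setIntegral_comp_smul_of_pos volume m Bh hc
    rw [Module.finrank_fin_fun] at e2
    have e3 : ∫ x in Bh, m ((s ^ (1 / d)) • x) = (s ^ (1 / d)) ^ j * ∫ x in Bh, m x := by
      simp_rw [hm_def, mon_smul k, ← hj_def]
      exact integral_const_mul _ _
    have e4 : ∫ x in (s ^ (1 / d)) • Bh, m x
        = (s ^ (1 / d)) ^ n * ((s ^ (1 / d)) ^ j * ∫ x in Bh, m x) := by
      rw [← e3, e2, smul_eq_mul, ← mul_assoc,
        mul_inv_cancel₀ (by positivity : ((s ^ (1 / d) : ℝ) ^ n) ≠ 0), one_mul]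
    rw [e1, e4, ← mul_assoc, ← pow_add, hpow s hs]
  -- lintegral moment scaling
  set M : (Fin n → ℝ) → ℝ≥0∞ := fun x => ENNReal.ofReal |m x| with hM_def
  have hM_meas : Measurable M := hm_meas.abs.ennreal_ofReal
  set Itot : ℝ≥0∞ := ∫⁻ x in Bh, M x with hI_def
  have hLscale : ∀ s : ℝ, 0 < s →
      ∫⁻ x in {x | h x ≤ s}, M x = ENNReal.ofReal (s ^ (p / d)) * Itot := by
    intro s hs
    have hc := hcpos s hs
    have e1 : ∫⁻ x in {x | h x ≤ s}, M x = ∫⁻ x in (s ^ (1 / d)) • Bh, M x :=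
      setLIntegral_congr (hae s hs)
    have e2 := setLIntegral_smul_set M hM_meas hBh_meas hc
    have e3 : ∀ x, M ((s ^ (1 / d)) • x) = ENNReal.ofReal ((s ^ (1 / d)) ^ j) * M x := by
      intro x
      rw [hM_def]
      simp only
      rw [hm_def]
      simp only
      rw [mon_smul k, ← hj_def, abs_mul, abs_of_nonneg (by positivity : (0:ℝ) ≤ (s ^ (1/d)) ^ j),
        ENNReal.ofReal_mul (by positivity)]
    rw [e1, e2]
    simp_rw [e3]
    rw [lintegral_const_mul _ hM_meas, ← mul_assoc, ← ENNReal.ofReal_mul (by positivity),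
      ← pow_add, hpow s hs]
  -- the layer-cake function
  set fe : (Fin n → ℝ) → ℝ → ℝ≥0∞ :=
    fun x s => if h x ≤ s then M x * ENNReal.ofReal (Real.exp (-s)) else 0 with hfe_def
  have hS_meas : MeasurableSet {q : (Fin n → ℝ) × ℝ | h q.1 ≤ q.2} :=
    measurableSet_le (hmeas.comp measurable_fst) measurable_snd
  have hfe_meas : Measurable (Function.uncurry fe) := by
    have : Function.uncurry fe = fun q : (Fin n → ℝ) × ℝ =>
        if h q.1 ≤ q.2 then M q.1 * ENNReal.ofReal (Real.exp (-q.2)) else 0 := rfl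
    rw [this]
    exact Measurable.ite hS_meas
      ((hM_meas.comp measurable_fst).mul (measurable_snd.neg.exp.ennreal_ofReal))
      measurable_const
  -- sublevel slices in s for fixed x
  have hIci_ae : ∀ t : ℝ, 0 ≤ t → (Ici t ∩ Ioi (0:ℝ) : Set ℝ) =ᵐ[volume] (Ioi t : Set ℝ) := by
    intro t ht
    rw [MeasureTheory.ae_eq_set]
    constructor
    · refine measure_mono_null (fun s hs => ?_) (measure_singleton t)
      obtain ⟨⟨h1, _⟩, h2⟩ := hs
      simp only [mem_Ioi, not_lt] at h2
      simp only [mem_singleton_iff]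
      linarith [le_antisymm h2 h1]
    · refine measure_mono_null (fun s hs => ?_) (measure_empty (μ := volume))
      obtain ⟨h1, h2⟩ := hs
      exact absurd ⟨mem_Ici.mpr (le_of_lt (mem_Ioi.mp h1)), mem_Ioi.mpr (lt_of_le_of_lt ht (mem_Ioi.mp h1))⟩ h2
  have hslice : ∀ x, ∫⁻ s in Ioi (0:ℝ), fe x s = M x * ENNReal.ofReal (Real.exp (-h x)) := by
    intro x
    have e0 : ∀ s : ℝ, fe x s
        = M x * (Ici (h x)).indicator (fun s => ENNReal.ofReal (Real.exp (-s))) s := by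
      intro s
      simp only [hfe_def]
      by_cases hcs : h x ≤ s
      · rw [if_pos hcs, indicator_of_mem (mem_Ici.mpr hcs)]
      · rw [if_neg hcs, indicator_of_notMem (fun hm => hcs (mem_Ici.mp hm)), mul_zero]
    simp_rw [e0]
    rw [lintegral_const_mul _ ((measurable_neg.exp.ennreal_ofReal).indicator measurableSet_Ici)]
    congr 1
    rw [lintegral_indicator measurableSet_Ici, Measure.restrict_restrict measurableSet_Ici,
      setLIntegral_congr (hIci_ae (h x) (hpos x))]
    have hint_exp : IntegrableOn (fun s : ℝ => Real.exp (-s)) (Ioi (h x)) := by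
      simpa using exp_neg_integrableOn_Ioi (h x) one_pos
    rw [← ofReal_integral_eq_lintegral_ofReal hint_exp
      (Filter.Eventually.of_forall fun s => (Real.exp_pos _).le), integral_exp_neg_Ioi]
  -- slices in x for fixed s
  have hxslice : ∀ s : ℝ, 0 < s →
      ∫⁻ x, fe x s = ENNReal.ofReal (Real.exp (-s)) * (ENNReal.ofReal (s ^ (p / d)) * Itot) := by
    intro s hs
    have e0 : ∀ x, fe x s
        = {x | h x ≤ s}.indicator (fun x => M x * ENNReal.ofReal (Real.exp (-s))) x := by
      intro x
      simp only [hfe_def]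
      by_cases hcs : h x ≤ s
      · rw [if_pos hcs, indicator_of_mem (show x ∈ {x | h x ≤ s} from hcs)]
      · rw [if_neg hcs, indicator_of_notMem (show x ∉ {x | h x ≤ s} from hcs)]
    simp_rw [e0]
    rw [lintegral_indicator (measurableSet_le hmeas measurable_const),
      lintegral_mul_const _ hM_meas, hLscale s hs, mul_comm]
  -- the Gamma value as a lintegral
  have hGamma_lint : ∫⁻ s in Ioi (0:ℝ), ENNReal.ofReal (Real.exp (-s) * s ^ (p / d))
      = ENNReal.ofReal (Real.Gamma (1 + p / d)) := by
    have hconv := Real.GammaIntegral_convergent (by positivity : (0:ℝ) < 1 + p / d)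
    have hexp : ∀ s : ℝ, Real.exp (-s) * s ^ (1 + p / d - 1) = Real.exp (-s) * s ^ (p / d) := by
      intro s; congr 2; ring
    rw [Real.Gamma_eq_integral (by positivity : (0:ℝ) < 1 + p / d)]
    simp_rw [hexp] at hconv ⊢
    rw [← ofReal_integral_eq_lintegral_ofReal hconv ?_]
    filter_upwards [self_mem_ae_restrict (measurableSet_Ioi : MeasurableSet (Ioi (0:ℝ)))]
      with s hs
    have : (0:ℝ) < s := hs
    positivity
  -- the key lintegral identity
  have hKeyL : ∫⁻ x, M x * ENNReal.ofReal (Real.exp (-h x))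
      = ENNReal.ofReal (Real.Gamma (1 + p / d)) * Itot := by
    have swap := lintegral_lintegral_swap (μ := (volume : Measure (Fin n → ℝ)))
      (ν := volume.restrict (Ioi (0:ℝ))) (f := fe) hfe_meas.aemeasurable
    calc ∫⁻ x, M x * ENNReal.ofReal (Real.exp (-h x))
        = ∫⁻ x, ∫⁻ s in Ioi (0:ℝ), fe x s := by simp_rw [hslice]
      _ = ∫⁻ s in Ioi (0:ℝ), ∫⁻ x, fe x s := swap
      _ = ∫⁻ s in Ioi (0:ℝ),
            ENNReal.ofReal (Real.exp (-s)) * (ENNReal.ofReal (s ^ (p / d)) * Itot) := by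
          refine setLIntegral_congr_fun measurableSet_Ioi ?_
          exact fun s hs => hxslice s hs
      _ = (∫⁻ s in Ioi (0:ℝ), ENNReal.ofReal (Real.exp (-s) * s ^ (p / d))) * Itot := by
          rw [← lintegral_mul_const _ (by fun_prop)]
          congr 1
          ext s
          rw [ENNReal.ofReal_mul (Real.exp_pos _).le, mul_assoc]
      _ = ENNReal.ofReal (Real.Gamma (1 + p / d)) * Itot := by rw [hGamma_lint]
  -- the enorm of the integrand
  have henorm : ∀ x, ‖m x * Real.exp (-h x)‖ₑ
      = M x * ENNReal.ofReal (Real.exp (-h x)) := by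
    intro x
    rw [Real.enorm_eq_ofReal_abs, abs_mul, abs_of_pos (Real.exp_pos _),
      ENNReal.ofReal_mul (abs_nonneg _)]
  have hGoal : Real.Gamma (1 + ((n : ℝ) + (∑ i, k i : ℕ)) / d) = Real.Gamma (1 + p / d) := rfl
  by_cases hIfin : Itot = ⊤
  · -- non-integrable case : both sides are zero
    have hL : ¬ IntegrableOn m Bh := by
      intro hint
      have := hint.2
      rw [hasFiniteIntegral_iff_norm] at this
      have heq : ∫⁻ x in Bh, ENNReal.ofReal ‖m x‖ = Itot := rfl
      rw [heq, hIfin] at this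
      exact (lt_irrefl _ this).elim
    have hR : ¬ Integrable (fun x => m x * Real.exp (-h x)) := by
      intro hint
      have := hint.2
      rw [HasFiniteIntegral] at this
      simp_rw [henorm] at this
      rw [hKeyL, hIfin, ENNReal.mul_top] at this
      · exact (lt_irrefl _ this).elim
      · simp only [ne_eq, ENNReal.ofReal_eq_zero, not_le]
        exact hGamma_pos
    rw [integral_undef hL, integral_undef hR, mul_zero]
  · -- integrable case
    have hIlt : Itot < ⊤ := lt_top_iff_ne_top.mpr hIfin
    have hGamma_ne : ENNReal.ofReal (Real.Gamma (1 + p / d)) ≠ ⊤ := ENNReal.ofReal_ne_top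
    -- integrability of m on sublevel sets
    have hint_sub : ∀ s : ℝ, 0 < s → IntegrableOn m {x | h x ≤ s} := by
      intro s hs
      refine ⟨hm_meas.aestronglyMeasurable.restrict, ?_⟩
      rw [hasFiniteIntegral_iff_norm]
      have heq : ∫⁻ x in {x | h x ≤ s}, ENNReal.ofReal ‖m x‖
          = ∫⁻ x in {x | h x ≤ s}, M x := rfl
      rw [heq, hLscale s hs]
      exact ENNReal.mul_lt_top ENNReal.ofReal_lt_top hIlt
    -- integrability of the full integrand
    have hint_full : Integrable (fun x => m x * Real.exp (-h x)) := by
      refine ⟨(hm_meas.mul (hmeas.neg.exp)).aestronglyMeasurable, ?_⟩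
      rw [HasFiniteIntegral]
      simp_rw [henorm]
      rw [hKeyL]
      exact ENNReal.mul_lt_top ENNReal.ofReal_lt_top hIlt
    -- the Bochner layer-cake function
    set fB : (Fin n → ℝ) → ℝ → ℝ :=
      fun x s => if h x ≤ s then m x * Real.exp (-s) else 0 with hfB_def
    have hfB_meas : Measurable (Function.uncurry fB) := by
      have : Function.uncurry fB = fun q : (Fin n → ℝ) × ℝ =>
          if h q.1 ≤ q.2 then m q.1 * Real.exp (-q.2) else 0 := rfl
      rw [this]
      exact Measurable.ite hS_meas
        ((hm_meas.comp measurable_fst).mul (measurable_snd.neg.exp)) measurable_const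
    have hfB_enorm : ∀ q : (Fin n → ℝ) × ℝ,
        ‖Function.uncurry fB q‖ₑ = Function.uncurry fe q := by
      rintro ⟨x, s⟩
      simp only [Function.uncurry, hfB_def, hfe_def]
      by_cases hcs : h x ≤ s
      · rw [if_pos hcs, if_pos hcs, Real.enorm_eq_ofReal_abs, abs_mul,
          abs_of_pos (Real.exp_pos _), ENNReal.ofReal_mul (abs_nonneg _)]
      · rw [if_neg hcs, if_neg hcs]
        simp
    have hfB_int : Integrable (Function.uncurry fB)
        ((volume : Measure (Fin n → ℝ)).prod (volume.restrict (Ioi (0:ℝ)))) := by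
      refine ⟨hfB_meas.aestronglyMeasurable, ?_⟩
      rw [HasFiniteIntegral, lintegral_congr hfB_enorm,
        lintegral_prod _ hfe_meas.aemeasurable]
      simp only [Function.uncurry_apply_pair]
      simp_rw [hslice]
      rw [hKeyL]
      exact ENNReal.mul_lt_top ENNReal.ofReal_lt_top hIlt
    -- Bochner slices in s for fixed x
    have hBslice : ∀ x, ∫ s in Ioi (0:ℝ), fB x s = m x * Real.exp (-h x) := by
      intro x
      have e0 : ∀ s : ℝ, fB x s
          = (Ici (h x)).indicator (fun s => m x * Real.exp (-s)) s := by
        intro s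
        simp only [hfB_def]
        by_cases hcs : h x ≤ s
        · rw [if_pos hcs, indicator_of_mem (mem_Ici.mpr hcs)]
        · rw [if_neg hcs, indicator_of_notMem (fun hm => hcs (mem_Ici.mp hm))]
      simp_rw [e0]
      rw [integral_indicator measurableSet_Ici, Measure.restrict_restrict measurableSet_Ici,
        setIntegral_congr_set (hIci_ae (h x) (hpos x)), integral_const_mul,
        integral_exp_neg_Ioi]
    -- Bochner slices in x for fixed s
    have hBxslice : ∀ s : ℝ, 0 < s →
        ∫ x, fB x s = Real.exp (-s) * s ^ (p / d) * ∫ x in Bh, m x := by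
      intro s hs
      have e0 : ∀ x, fB x s
          = {x | h x ≤ s}.indicator (fun x => m x * Real.exp (-s)) x := by
        intro x
        simp only [hfB_def]
        by_cases hcs : h x ≤ s
        · rw [if_pos hcs, indicator_of_mem (show x ∈ {x | h x ≤ s} from hcs)]
        · rw [if_neg hcs, indicator_of_notMem (show x ∉ {x | h x ≤ s} from hcs)]
      simp_rw [e0]
      rw [integral_indicator (measurableSet_le hmeas measurable_const), integral_mul_const, hBint s hs]
      ring
    -- the key Bochner identity
    have hKeyB : ∫ x, m x * Real.exp (-h x)
        = Real.Gamma (1 + p / d) * ∫ x in Bh, m x := by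
      calc ∫ x, m x * Real.exp (-h x)
          = ∫ x, ∫ s in Ioi (0:ℝ), fB x s := by simp_rw [hBslice]
        _ = ∫ s in Ioi (0:ℝ), ∫ x, fB x s := integral_integral_swap hfB_int
        _ = ∫ s in Ioi (0:ℝ), Real.exp (-s) * s ^ (p / d) * ∫ x in Bh, m x := by
            refine setIntegral_congr_fun measurableSet_Ioi fun s hs => ?_
            exact hBxslice s hs
        _ = (∫ s in Ioi (0:ℝ), Real.exp (-s) * s ^ (p / d)) * ∫ x in Bh, m x :=
            integral_mul_const _ _
        _ = Real.Gamma (1 + p / d) * ∫ x in Bh, m x := by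
            congr 1
            rw [Real.Gamma_eq_integral (by positivity : (0:ℝ) < 1 + p / d)]
            refine setIntegral_congr_fun measurableSet_Ioi fun s hs => ?_
            congr 2
            ring
    rw [hGoal, hKeyB, inv_mul_cancel_left₀ hGamma_pos.ne']
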